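/- Let A be a symmetric nonnegative n×n matrix and M ∈ ℝ₊^{n×n} satisfy A = M + Mᵀ. Then st₊(A) ≤ 2·rk₊(M). -/

import Mathlib

open Matrix

noncomputable def sntRank {m : Type*} [Fintype m] (A : Matrix m m ℝ) : ℕ :=
  sInf {k : ℕ | ∃ B : Matrix m (Fin k) ℝ, ∃ C : Matrix (Fin k) (Fin k) ℝ,
    (∀ i j, 0 ≤ B i j) ∧ (∀ i j, 0 ≤ C i j) ∧ C.IsSymm ∧ A = B * C * Bᵀ}


noncomputable def nnRank {m n : Type*} [Fintype m] [Fintype n] (A : Matrix m n ℝ) : ℕ :=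
  sInf {k : ℕ | ∃ U : Matrix m (Fin k) ℝ, ∃ V : Matrix n (Fin k) ℝ,
    (∀ i j, 0 ≤ U i j) ∧ (∀ i j, 0 ≤ V i j) ∧ A = U * Vᵀ}

theorem stmt_8 {n : ℕ} (A M : Matrix (Fin n) (Fin n) ℝ)
    (hA : A.IsSymm) (hApos : ∀ i j, 0 ≤ A i j)
    (hM : ∀ i j, 0 ≤ M i j) (hAM : A = M + Mᵀ) :
    sntRank A ≤ 2 * nnRank M := by
  -- the nnRank set is nonempty, hence its sInf is attained
  have hne : {k : ℕ | ∃ U : Matrix (Fin n) (Fin k) ℝ, ∃ V : Matrix (Fin n) (Fin k) ℝ,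
      (∀ i j, 0 ≤ U i j) ∧ (∀ i j, 0 ≤ V i j) ∧ M = U * Vᵀ}.Nonempty := by
    refine ⟨n, M, 1, hM, ?_, by simp⟩
    intro i j
    simp only [Matrix.one_apply]
    split <;> norm_num
  have hmem := Nat.sInf_mem hne
  obtain ⟨U, V, hU, hV, hUV⟩ := hmem
  set k := nnRank M with hk
  -- build the witness over Fin k ⊕ Fin k first
  let B0 : Matrix (Fin n) (Fin k ⊕ Fin k) ℝ := Matrix.fromCols U V
  let C0 : Matrix (Fin k ⊕ Fin k) (Fin k ⊕ Fin k) ℝ := Matrix.fromBlocks 0 1 1 0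
  have hBC : B0 * C0 * B0ᵀ = A := by
    have h1 : B0 * C0 = Matrix.fromCols V U := by
      have := Matrix.fromCols_mul_fromBlocks U V (0 : Matrix (Fin k) (Fin k) ℝ) (1 : Matrix (Fin k) (Fin k) ℝ)
        (1 : Matrix (Fin k) (Fin k) ℝ) (0 : Matrix (Fin k) (Fin k) ℝ)
      refine this.trans ?_
      erw [Matrix.mul_zero, Matrix.mul_one, zero_add, Matrix.mul_one, Matrix.mul_zero, add_zero]
      rfl
    have h2 : B0ᵀ = Matrix.fromRows Uᵀ Vᵀ := Matrix.transpose_fromCols U V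
    rw [h1, h2]
    refine (Matrix.fromCols_mul_fromRows V U Uᵀ Vᵀ).trans ?_
    rw [hAM]
    have ht : Mᵀ = V * Uᵀ := by
      conv_lhs => rw [hUV]
      rw [Matrix.transpose_mul, Matrix.transpose_transpose]
    rw [← hUV, ht, add_comm]
  let e : Fin (2 * k) ≃ Fin k ⊕ Fin k := (finCongr (two_mul k)).trans finSumFinEquiv.symm
  apply Nat.sInf_le
  refine ⟨B0.submatrix id e, C0.submatrix e e, ?_, ?_, ?_, ?_⟩
  · intro i j
    rcases hj : (e j) with a | a <;> simp only [B0, Matrix.fromCols, Matrix.submatrix_apply,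
      Matrix.of_apply, id_eq, hj, Sum.elim_inl, Sum.elim_inr] <;> [exact hU i a; exact hV i a]
  · intro i j
    rcases hi : (e i) with a | a <;> rcases hj : (e j) with b | b <;>
      simp [C0, Matrix.submatrix_apply, hi, hj, Matrix.fromBlocks, Matrix.one_apply] <;>
      split <;> norm_num
  · show (C0.submatrix e e)ᵀ = C0.submatrix e e
    have : C0ᵀ = C0 := by
      simp [C0, Matrix.fromBlocks_transpose]
    rw [Matrix.transpose_submatrix, this]
  · have hBt : (B0.submatrix id e)ᵀ = B0ᵀ.submatrix e id := by
      rw [Matrix.transpose_submatrix]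
    rw [hBt, Matrix.submatrix_mul_equiv, Matrix.submatrix_mul_equiv]
    simpa using hBC.symm
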